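/- arXiv:1810.11328 — 2 statements merged into one kernel-verified Lean document; each statement's English description precedes it below -/
import Mathlib

section
/- Let r(ξ) be the 3×3 antisymmetric matrix with rows (0, −ξ₃, ξ₂), (ξ₃, 0, −ξ₁), (−ξ₂, ξ₁, 0) (so r(ξ)v = ξ × v). Then for every nonzero ξ ∈ ℝ³, the 4×3 matrix b(ξ) with upper 3×3 block r(ξ)μ₀^{−1/2} and last row ξᵗ μ₀^{1/2} has rank 3, where μ₀ is any symmetric positive definite real 3×3 matrix. -/
/-- The antisymmetric matrix `r(ξ)` of the cross product: `r(ξ) v = ξ × v`. -/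
noncomputable def crossMat (ξ : Fin 3 → ℝ) : Matrix (Fin 3) (Fin 3) ℝ :=
  !![0, -ξ 2, ξ 1; ξ 2, 0, -ξ 0; -ξ 1, ξ 0, 0]

/-- The `4×3` symbol `b(ξ)` with upper block `r(ξ) μ₀^{-1/2}` and last row `ξᵗ μ₀^{1/2}`. -/
noncomputable def maxwellSymbol (m minv : Matrix (Fin 3) (Fin 3) ℝ) (ξ : Fin 3 → ℝ) :
    Matrix (Fin 4) (Fin 3) ℝ :=
  Matrix.of fun i j =>
    if h : (i : ℕ) < 3 then (crossMat ξ * minv) ⟨(i : ℕ), h⟩ j else (m.mulVec ξ) j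

lemma cross_ker (ξ w : Fin 3 → ℝ) (hξ : ξ ≠ 0)
    (h : (crossMat ξ).mulVec w = 0) : ∃ c : ℝ, w = c • ξ := by
  have h0 := congrFun h 0
  have h1 := congrFun h 1
  have h2 := congrFun h 2
  simp [crossMat, Matrix.mulVec, dotProduct, Fin.sum_univ_three] at h0 h1 h2
  have hex : ξ 0 ≠ 0 ∨ ξ 1 ≠ 0 ∨ ξ 2 ≠ 0 := by
    by_contra hc
    push_neg at hc
    exact hξ (funext fun i => by fin_cases i <;> simp [hc.1, hc.2.1, hc.2.2])
  rcases hex with h' | h' | h'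
  · refine ⟨w 0 / ξ 0, funext fun j => ?_⟩
    fin_cases j
    · show w 0 = w 0 / ξ 0 * ξ 0; field_simp
    · show w 1 = w 0 / ξ 0 * ξ 1; field_simp; linarith
    · show w 2 = w 0 / ξ 0 * ξ 2; field_simp; linarith
  · refine ⟨w 1 / ξ 1, funext fun j => ?_⟩
    fin_cases j
    · show w 0 = w 1 / ξ 1 * ξ 0; field_simp; linarith
    · show w 1 = w 1 / ξ 1 * ξ 1; field_simp
    · show w 2 = w 1 / ξ 1 * ξ 2; field_simp; linarith
  · refine ⟨w 2 / ξ 2, funext fun j => ?_⟩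
    fin_cases j
    · show w 0 = w 2 / ξ 2 * ξ 0; field_simp; linarith
    · show w 1 = w 2 / ξ 2 * ξ 1; field_simp; linarith
    · show w 2 = w 2 / ξ 2 * ξ 2; field_simp

/-- For every nonzero `ξ ∈ ℝ³`, the symbol `b(ξ)` has rank `3`.  Here `m = μ₀^{1/2}` is the
positive square root of the symmetric positive definite matrix `μ₀` and `minv = μ₀^{-1/2}`. -/
theorem maxwellSymbol_rank (μ₀ m minv : Matrix (Fin 3) (Fin 3) ℝ)
    (hμsym : μ₀.IsSymm) (hμpos : μ₀.PosDef)
    (hm : m.PosDef) (hmsq : m * m = μ₀)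
    (hminv : m * minv = 1) (hminv' : minv * m = 1)
    (ξ : Fin 3 → ℝ) (hξ : ξ ≠ 0) :
    (maxwellSymbol m minv ξ).rank = 3 := by
  have hinj : Function.Injective (maxwellSymbol m minv ξ).mulVecLin := by
    rw [← LinearMap.ker_eq_bot, LinearMap.ker_eq_bot']
    intro v hv
    simp only [Matrix.mulVecLin_apply] at hv
    -- upper block
    have hup : (crossMat ξ).mulVec (minv.mulVec v) = 0 := by
      funext i
      have : (maxwellSymbol m minv ξ).mulVec v (Fin.castLE (by norm_num) i) = 0 :=
        congrFun hv _
      show _ = (0 : Fin 3 → ℝ) i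
      rw [Pi.zero_apply, ← this]
      rw [Matrix.mulVec_mulVec]
      simp only [Matrix.mulVec, dotProduct, maxwellSymbol, Matrix.of_apply]
      apply Finset.sum_congr rfl
      intro j _
      have hi : ((Fin.castLE (by norm_num : 3 ≤ 4) i : Fin 4) : ℕ) < 3 := i.isLt
      rw [dif_pos hi]
      rfl
    obtain ⟨c, hc⟩ := cross_ker ξ _ hξ hup
    have hv_eq : v = c • m.mulVec ξ := by
      have : m.mulVec (minv.mulVec v) = v := by
        rw [Matrix.mulVec_mulVec, hminv, Matrix.one_mulVec]
      rw [← this, hc, Matrix.mulVec_smul]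
    -- last row
    have hlast : (maxwellSymbol m minv ξ).mulVec v 3 = 0 := congrFun hv 3
    have hrow : ∑ j, (m.mulVec ξ) j * v j = 0 := by
      rw [← hlast]
      simp only [Matrix.mulVec, dotProduct, maxwellSymbol, Matrix.of_apply]
      apply Finset.sum_congr rfl
      intro j _
      rw [dif_neg (by decide)]
    have hmξ : m.mulVec ξ ≠ 0 := by
      intro h
      apply hξ
      have : minv.mulVec (m.mulVec ξ) = ξ := by
        rw [Matrix.mulVec_mulVec, hminv', Matrix.one_mulVec]
      rw [← this, h, Matrix.mulVec_zero]
    have hsum : ∑ j, (m.mulVec ξ) j * (m.mulVec ξ) j > 0 := by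
      obtain ⟨i, hi⟩ := Function.ne_iff.mp hmξ
      have : (0:ℝ) < (m.mulVec ξ) i * (m.mulVec ξ) i := mul_self_pos.mpr hi
      refine lt_of_lt_of_le this ?_
      exact Finset.single_le_sum (f := fun j => (m.mulVec ξ) j * (m.mulVec ξ) j)
        (fun j _ => mul_self_nonneg _) (Finset.mem_univ i)
    have hc0 : c = 0 := by
      rw [hv_eq] at hrow
      simp only [Pi.smul_apply, smul_eq_mul] at hrow
      have : c * ∑ j, (m.mulVec ξ) j * (m.mulVec ξ) j = 0 := by
        rw [Finset.mul_sum]; rw [← hrow]; congr 1; funext j; ring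
      rcases mul_eq_zero.mp this with h | h
      · exact h
      · exact absurd h (ne_of_gt hsum)
    rw [hv_eq, hc0, zero_smul]
  rw [Matrix.rank, LinearMap.finrank_range_of_inj hinj]
  simp
end

section
/- Let μ₀ be a symmetric positive definite real 3×3 matrix, let η⁰ be a real symmetric positive definite 3×3 matrix with |η⁰| ≤ C_η and |(η⁰)⁻¹| ≤ C_{η⁻¹}, and let ν̲ > 0 with ν̲ ≤ C_ν and ν̲⁻¹ ≤ C_{ν⁻¹}. Define the symbol a(ξ) = μ₀^{−1/2} r(ξ)ᵗ (η⁰)⁻¹ r(ξ) μ₀^{−1/2} + ν̲ μ₀^{1/2} ξ ξᵗ μ₀^{1/2}. Then c₁|ξ|² I₃ ≤ a(ξ) ≤ c₂|ξ|² I₃ for all ξ ∈ ℝ³, where c₁ = α₀ (max{C_η, C_{ν⁻¹}})⁻¹ and c₂ = α₁ max{C_{η⁻¹}, C_ν}, with α₀ = min{|μ₀|⁻¹, |μ₀⁻¹|⁻¹}, α₁ = |μ₀| + |μ₀⁻¹|. -/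
open Matrix

/-- The `ℓ²` operator norm `|A|` of a `3×3` real matrix. -/
noncomputable def opn (A : Matrix (Fin 3) (Fin 3) ℝ) : ℝ :=
  ‖Matrix.toEuclideanCLM (𝕜 := ℝ) A‖

/-- The symbol `a(ξ) = μ₀^{-1/2} r(ξ)ᵀ (η⁰)⁻¹ r(ξ) μ₀^{-1/2} + ν̲ μ₀^{1/2} ξξᵗ μ₀^{1/2}`
of the effective operator. -/
noncomputable def effSymbol (m minv η0 : Matrix (Fin 3) (Fin 3) ℝ) (ν : ℝ)
    (ξ : Fin 3 → ℝ) : Matrix (Fin 3) (Fin 3) ℝ :=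
  minv * (crossMat ξ)ᵀ * η0⁻¹ * crossMat ξ * minv + ν • (m * Matrix.vecMulVec ξ ξ * m)

namespace EffAux

lemma dot_sq (v : Fin 3 → ℝ) :
    v ⬝ᵥ v = ‖(WithLp.equiv 2 (Fin 3 → ℝ)).symm v‖^2 := by
  rw [EuclideanSpace.norm_sq_eq]
  simp [dotProduct, sq]

lemma dot_nonneg (v : Fin 3 → ℝ) : 0 ≤ v ⬝ᵥ v := by
  rw [dot_sq]; positivity

lemma dot_mulVec_le (A : Matrix (Fin 3) (Fin 3) ℝ) (v : Fin 3 → ℝ) :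
    v ⬝ᵥ A *ᵥ v ≤ opn A * (v ⬝ᵥ v) := by
  set v' := (WithLp.equiv 2 (Fin 3 → ℝ)).symm v with hv'
  have h1 : v ⬝ᵥ A *ᵥ v
      = inner ℝ v' (Matrix.toEuclideanCLM (𝕜 := ℝ) A v') := by
    simp [hv', PiLp.inner_apply, dotProduct, RCLike.inner_apply, Matrix.toLin'_apply, mulVec, mul_comm]
  rw [h1, dot_sq, ← hv']
  calc inner ℝ v' (Matrix.toEuclideanCLM (𝕜 := ℝ) A v')
      ≤ ‖v'‖ * ‖Matrix.toEuclideanCLM (𝕜 := ℝ) A v'‖ := real_inner_le_norm _ _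
    _ ≤ ‖v'‖ * (opn A * ‖v'‖) := by
        gcongr; exact (Matrix.toEuclideanCLM (𝕜 := ℝ) A).le_opNorm v'
    _ = opn A * ‖v'‖ ^ 2 := by ring

lemma one_le_opn_mul (A B : Matrix (Fin 3) (Fin 3) ℝ) (h : A * B = 1) :
    1 ≤ opn A * opn B := by
  have hmul : Matrix.toEuclideanCLM (𝕜 := ℝ) (A * B)
      = Matrix.toEuclideanCLM (𝕜 := ℝ) A * Matrix.toEuclideanCLM (𝕜 := ℝ) B :=
    map_mul _ A B
  have h1 : opn (A*B) ≤ opn A * opn B := by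
    unfold opn; rw [hmul]; exact norm_mul_le _ _
  have h2 : opn (1 : Matrix (Fin 3) (Fin 3) ℝ) = 1 := by
    unfold opn
    rw [show Matrix.toEuclideanCLM (𝕜 := ℝ) (1 : Matrix (Fin 3) (Fin 3) ℝ) = 1 from map_one _]
    exact norm_one
  rw [h, h2] at h1; exact h1

lemma opn_pos_of_posdef {A : Matrix (Fin 3) (Fin 3) ℝ} (hA : A.PosDef) : 0 < opn A := by
  have h2 := hA.dotProduct_mulVec_pos (x := (Pi.single 0 1 : Fin 3 → ℝ)) (by
    intro hc
    have := congrFun hc 0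
    simp [Pi.single_apply] at this)
  have h3 := dot_mulVec_le A (Pi.single 0 1)
  have h4 : (Pi.single 0 1 : Fin 3 → ℝ) ⬝ᵥ Pi.single 0 1 = 1 := by
    simp [dotProduct, Pi.single_apply]
  rw [h4, mul_one] at h3
  have : star (Pi.single 0 1 : Fin 3 → ℝ) = Pi.single 0 1 := by simp
  rw [this] at h2
  linarith

/-- move a symmetric matrix across the dot product -/
lemma dot_shift {A : Matrix (Fin 3) (Fin 3) ℝ} (hA : Aᵀ = A) (u v : Fin 3 → ℝ) :
    u ⬝ᵥ A *ᵥ v = (A *ᵥ u) ⬝ᵥ v := by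
  rw [dotProduct_mulVec, ← mulVec_transpose, hA]

/-- Cauchy–Schwarz for a positive semidefinite quadratic form. -/
lemma psd_cs {A : Matrix (Fin 3) (Fin 3) ℝ} (hA : Aᵀ = A)
    (hpos : ∀ u : Fin 3 → ℝ, 0 ≤ u ⬝ᵥ A *ᵥ u) (u v : Fin 3 → ℝ) :
    (u ⬝ᵥ A *ᵥ v)^2 ≤ (u ⬝ᵥ A *ᵥ u) * (v ⬝ᵥ A *ᵥ v) := by
  have hsym : v ⬝ᵥ A *ᵥ u = u ⬝ᵥ A *ᵥ v := by
    rw [dot_shift hA v u, dotProduct_comm]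
  have key : ∀ θ : ℝ, 0 ≤ (v ⬝ᵥ A *ᵥ v) * (θ*θ) + (2 * (u ⬝ᵥ A *ᵥ v)) * θ + (u ⬝ᵥ A *ᵥ u) := by
    intro θ
    have h0 := hpos (u + θ • v)
    have hexp : (u + θ • v) ⬝ᵥ A *ᵥ (u + θ • v)
        = (v ⬝ᵥ A *ᵥ v) * (θ*θ) + (2 * (u ⬝ᵥ A *ᵥ v)) * θ + (u ⬝ᵥ A *ᵥ u) := by
      simp only [mulVec_add, add_dotProduct, dotProduct_add, mulVec_smul,
        smul_dotProduct, dotProduct_smul, smul_eq_mul, hsym]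
      ring
    rw [hexp] at h0
    exact h0
  have hd := discrim_le_zero key
  rw [discrim] at hd
  nlinarith [hd]

/-- The key scalar inequality. -/
lemma scalar_key (M s t N γ : ℝ) (hM : 1 ≤ M) (hγ : 0 ≤ γ) (hN : 0 ≤ N)
    (ht : t^2 ≤ (M - 1/M) * N * γ) : s^2 ≤ (M*s - t)^2 + N/M * γ := by
  have hM0 : (0:ℝ) < M := lt_of_lt_of_le one_pos hM
  rcases eq_or_lt_of_le hM with h1 | h1
  · have : t^2 ≤ 0 := by rw [← h1] at ht; simpa using ht
    have ht0 : t = 0 := by nlinarith [sq_nonneg t]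
    subst ht0
    rw [← h1]
    have := mul_nonneg hN hγ
    nlinarith
  · have hpos : (0:ℝ) < M * (M^2 - 1) := by nlinarith
    have ht'' : t^2 * M ≤ (M^2 - 1) * (N * γ) := by
      have := mul_le_mul_of_nonneg_right ht (le_of_lt hM0)
      have heq : (M - 1/M) * N * γ * M = (M^2 - 1) * (N * γ) := by
        field_simp
      linarith [heq ▸ this]
    have hmain : s^2 * (M * (M^2 - 1)) ≤ (M*s - t)^2 * (M * (M^2 - 1)) + N * γ * (M^2 - 1) := by
      nlinarith [mul_nonneg (le_of_lt hM0) (sq_nonneg (M*t - (M^2 - 1)*s)), ht'']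
    rw [← mul_le_mul_iff_of_pos_right hpos]
    have heq2 : ((M*s - t)^2 + N/M * γ) * (M * (M^2 - 1))
        = (M*s - t)^2 * (M * (M^2 - 1)) + N * γ * (M^2 - 1) := by
      field_simp
    rw [heq2]
    exact hmain

lemma cross_lagrange (ξ y : Fin 3 → ℝ) :
    (crossMat ξ *ᵥ y) ⬝ᵥ (crossMat ξ *ᵥ y) = (ξ ⬝ᵥ ξ) * (y ⬝ᵥ y) - (ξ ⬝ᵥ y)^2 := by
  simp [crossMat, mulVec, dotProduct, Fin.sum_univ_three]
  ring

lemma vecMulVec_form (ξ z : Fin 3 → ℝ) :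
    z ⬝ᵥ (vecMulVec ξ ξ *ᵥ z) = (ξ ⬝ᵥ z)^2 := by
  simp [vecMulVec, mulVec, dotProduct, Fin.sum_univ_three]
  ring

lemma vecMulVec_transp (ξ : Fin 3 → ℝ) : (vecMulVec ξ ξ)ᵀ = vecMulVec ξ ξ := by
  ext i j; simp [vecMulVec, transpose_apply]; ring

lemma dot_self_zero {v : Fin 3 → ℝ} (h : v ⬝ᵥ v = 0) : v = 0 :=
  dotProduct_self_eq_zero.mp h

lemma min_inv_eq (a b : ℝ) (ha : 0 < a) (hb : 0 < b) :
    min a⁻¹ b⁻¹ = (max a b)⁻¹ := by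
  rcases le_total a b with h | h
  · rw [max_eq_right h, min_eq_right (by gcongr)]
  · rw [max_eq_left h, min_eq_left (by gcongr)]

lemma isHerm_of_transpose {A : Matrix (Fin 3) (Fin 3) ℝ} (h : Aᵀ = A) : A.IsHermitian := by
  show Aᴴ = A
  rw [conjTranspose_eq_transpose_of_trivial]
  exact h

lemma star_lemma (μ₀ m minv : Matrix (Fin 3) (Fin 3) ℝ)
    (hμT : μ₀ᵀ = μ₀) (hmT : mᵀ = m) (hminvT : minvᵀ = minv)
    (hmsq : m * m = μ₀) (hminv : m * minv = 1)
    (ξ v : Fin 3 → ℝ) :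
    (ξ ⬝ᵥ ξ) / (max (opn μ₀) (opn μ₀⁻¹)) * (v ⬝ᵥ μ₀ *ᵥ v)
      ≤ (ξ ⬝ᵥ ξ) * (v ⬝ᵥ v) - (ξ ⬝ᵥ v)^2 + ((μ₀ *ᵥ ξ) ⬝ᵥ v)^2 := by
  set M := max (opn μ₀) (opn μ₀⁻¹) with hMdef
  have hμinv : μ₀⁻¹ = minv * minv := by
    apply inv_eq_right_inv
    rw [← hmsq, mul_assoc, ← mul_assoc m minv minv, hminv, one_mul, hminv]
  have hμu : μ₀ * μ₀⁻¹ = 1 := by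
    rw [hμinv, ← hmsq, mul_assoc, ← mul_assoc m minv minv, hminv, one_mul, hminv]
  have hM1 : 1 ≤ M := by
    have h1 := one_le_opn_mul μ₀ μ₀⁻¹ hμu
    have h2 : opn μ₀ ≤ M := le_max_left _ _
    have h3 : opn μ₀⁻¹ ≤ M := le_max_right _ _
    have h4 : 0 ≤ opn μ₀ := norm_nonneg _
    have h5 : 0 ≤ opn μ₀⁻¹ := norm_nonneg _
    nlinarith
  have hM0 : (0:ℝ) < M := lt_of_lt_of_le one_pos hM1
  set N := ξ ⬝ᵥ ξ with hNdef
  have hN0 : 0 ≤ N := dot_nonneg ξ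
  rcases eq_or_lt_of_le hN0 with hNz | hNpos
  · -- ξ = 0
    have hξ0 : ξ = 0 := dot_self_zero hNz.symm
    have h1 : ξ ⬝ᵥ v = 0 := by rw [hξ0]; simp
    have h2 : (μ₀ *ᵥ ξ) ⬝ᵥ v = 0 := by rw [hξ0]; simp
    have h3 : N = 0 := hNz.symm
    rw [h1, h2, h3]
    simp
  -- main case
  set B : Matrix (Fin 3) (Fin 3) ℝ := M • (1 : Matrix (Fin 3) (Fin 3) ℝ) - μ₀ with hBdef
  have hBT : Bᵀ = B := by
    rw [hBdef, transpose_sub, transpose_smul, transpose_one, hμT]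
  have hBform : ∀ u : Fin 3 → ℝ, u ⬝ᵥ B *ᵥ u = M * (u ⬝ᵥ u) - u ⬝ᵥ μ₀ *ᵥ u := by
    intro u
    rw [hBdef, sub_mulVec, smul_mulVec, one_mulVec, dotProduct_sub, dotProduct_smul]
    simp [smul_eq_mul]
  have hBpos : ∀ u : Fin 3 → ℝ, 0 ≤ u ⬝ᵥ B *ᵥ u := by
    intro u
    rw [hBform u]
    have h1 := dot_mulVec_le μ₀ u
    have h2 : opn μ₀ * (u ⬝ᵥ u) ≤ M * (u ⬝ᵥ u) :=
      mul_le_mul_of_nonneg_right (le_max_left _ _) (dot_nonneg u)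
    linarith
  set γ := v ⬝ᵥ B *ᵥ v with hγdef
  set β := ξ ⬝ᵥ B *ᵥ ξ with hβdef
  set t := ξ ⬝ᵥ B *ᵥ v with htdef
  set s := ξ ⬝ᵥ v with hsdef
  have hγ0 : 0 ≤ γ := hBpos v
  have ht2 : t^2 ≤ β * γ := psd_cs hBT hBpos ξ v
  have hmm : ∀ u : Fin 3 → ℝ, (m *ᵥ u) ⬝ᵥ (m *ᵥ u) = u ⬝ᵥ μ₀ *ᵥ u := by
    intro u
    rw [← dot_shift hmT u (m *ᵥ u), mulVec_mulVec, hmsq]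
  have hmm' : ∀ u : Fin 3 → ℝ, (minv *ᵥ u) ⬝ᵥ (minv *ᵥ u) = u ⬝ᵥ μ₀⁻¹ *ᵥ u := by
    intro u
    rw [← dot_shift hminvT u (minv *ᵥ u), mulVec_mulVec, hμinv]
  have hNself : (m *ᵥ ξ) ⬝ᵥ (minv *ᵥ ξ) = N := by
    rw [← dot_shift hmT ξ (minv *ᵥ ξ), mulVec_mulVec, hminv, one_mulVec]
  have hcs : ((m *ᵥ ξ) ⬝ᵥ (minv *ᵥ ξ))^2
      ≤ ((m *ᵥ ξ) ⬝ᵥ (m *ᵥ ξ)) * ((minv *ᵥ ξ) ⬝ᵥ (minv *ᵥ ξ)) := by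
    have := psd_cs (A := (1 : Matrix (Fin 3) (Fin 3) ℝ)) transpose_one
      (fun u => by rw [one_mulVec]; exact dot_nonneg u) (m *ᵥ ξ) (minv *ᵥ ξ)
    simpa [one_mulVec] using this
  have hQpos : 0 ≤ ξ ⬝ᵥ μ₀ *ᵥ ξ := by rw [← hmm ξ]; exact dot_nonneg _
  have hμξξ : N / M ≤ ξ ⬝ᵥ μ₀ *ᵥ ξ := by
    rw [hNself, hmm, hmm'] at hcs
    have hub : ξ ⬝ᵥ μ₀⁻¹ *ᵥ ξ ≤ M * N :=
      le_trans (dot_mulVec_le _ _) (mul_le_mul_of_nonneg_right (le_max_right _ _) hN0)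
    have h6 : N * N ≤ (ξ ⬝ᵥ μ₀ *ᵥ ξ) * (M * N) := by
      calc N * N = N^2 := by ring
        _ ≤ (ξ ⬝ᵥ μ₀ *ᵥ ξ) * (ξ ⬝ᵥ μ₀⁻¹ *ᵥ ξ) := hcs
        _ ≤ (ξ ⬝ᵥ μ₀ *ᵥ ξ) * (M * N) := mul_le_mul_of_nonneg_left hub hQpos
    rw [div_le_iff₀ hM0]
    have h7 : N ≤ (ξ ⬝ᵥ μ₀ *ᵥ ξ) * M := by
      have := (mul_le_mul_iff_of_pos_right hNpos).mp (by linarith [h6] : N * N ≤ (ξ ⬝ᵥ μ₀ *ᵥ ξ) * M * N)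
      linarith
    linarith
  have hβub : β ≤ (M - 1/M) * N := by
    rw [hβdef, hBform ξ, ← hNdef]
    have : N / M = 1/M * N := by ring
    linarith [hμξξ, this ▸ hμξξ]
  have ht2' : t^2 ≤ (M - 1/M) * N * γ := by
    calc t^2 ≤ β * γ := ht2
      _ ≤ (M - 1/M) * N * γ := mul_le_mul_of_nonneg_right hβub hγ0
  have hμξv : (μ₀ *ᵥ ξ) ⬝ᵥ v = M * s - t := by
    rw [← dot_shift hμT ξ v]
    have : μ₀ *ᵥ v = M • v - B *ᵥ v := by
      rw [hBdef, sub_mulVec, smul_mulVec, one_mulVec, sub_sub_cancel]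
    rw [this, dotProduct_sub, dotProduct_smul]
    simp [smul_eq_mul, hsdef, htdef]
  have hμvv : v ⬝ᵥ μ₀ *ᵥ v = M * (v ⬝ᵥ v) - γ := by
    rw [hγdef, hBform v]; ring
  rw [hμvv, hμξv]
  have hkey := scalar_key M s t N γ hM1 hγ0 hN0 ht2'
  have hexp : N / M * (M * (v ⬝ᵥ v) - γ) = N * (v ⬝ᵥ v) - N/M * γ := by
    field_simp
  rw [hexp]
  linarith

lemma eff_form (m minv η0 : Matrix (Fin 3) (Fin 3) ℝ)
    (hmT : mᵀ = m) (hminvT : minvᵀ = minv) (ν : ℝ) (ξ x : Fin 3 → ℝ) :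
    x ⬝ᵥ (effSymbol m minv η0 ν ξ) *ᵥ x
      = (crossMat ξ *ᵥ (minv *ᵥ x)) ⬝ᵥ (η0⁻¹ *ᵥ (crossMat ξ *ᵥ (minv *ᵥ x)))
        + ν * (ξ ⬝ᵥ (m *ᵥ x))^2 := by
  unfold effSymbol
  rw [add_mulVec, dotProduct_add]
  congr 1
  · simp only [← mulVec_mulVec]
    rw [dot_shift hminvT]
    rw [dotProduct_mulVec (minv *ᵥ x) (crossMat ξ)ᵀ, vecMul_transpose]
  · rw [smul_mulVec, dotProduct_smul, smul_eq_mul]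
    simp only [← mulVec_mulVec]
    rw [dot_shift hmT, vecMulVec_form]

end EffAux

set_option maxHeartbeats 1000000 in
open EffAux in
/-- Two-sided bound `c₁ |ξ|² I₃ ≤ a(ξ) ≤ c₂ |ξ|² I₃` on the symbol of the effective
operator, with `c₁ = α₀ (max{C_η, C_{ν⁻¹}})⁻¹`, `c₂ = α₁ max{C_{η⁻¹}, C_ν}`,
`α₀ = min{|μ₀|⁻¹, |μ₀⁻¹|⁻¹}`, `α₁ = |μ₀| + |μ₀⁻¹|`. -/
theorem effSymbol_two_sided_bound (μ₀ m minv η0 : Matrix (Fin 3) (Fin 3) ℝ)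
    (hμsym : μ₀.IsSymm) (hμpos : μ₀.PosDef)
    (hm : m.PosDef) (hmsq : m * m = μ₀)
    (hminv : m * minv = 1) (hminv' : minv * m = 1)
    (hη0sym : η0.IsSymm) (hη0pos : η0.PosDef)
    (ν Cη Cηinv Cν Cνinv : ℝ) (hν : 0 < ν)
    (hCη : opn η0 ≤ Cη) (hCηinv : opn η0⁻¹ ≤ Cηinv)
    (hCν : ν ≤ Cν) (hCνinv : ν⁻¹ ≤ Cνinv)
    (ξ : Fin 3 → ℝ) :
    (effSymbol m minv η0 ν ξ -
        (min (opn μ₀)⁻¹ (opn μ₀⁻¹)⁻¹ * (max Cη Cνinv)⁻¹ * ∑ i, ξ i ^ 2) •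
          (1 : Matrix (Fin 3) (Fin 3) ℝ)).PosSemidef ∧
      (((opn μ₀ + opn μ₀⁻¹) * max Cηinv Cν * ∑ i, ξ i ^ 2) •
          (1 : Matrix (Fin 3) (Fin 3) ℝ) - effSymbol m minv η0 ν ξ).PosSemidef := by
  -- basic symmetry facts
  have hμT : μ₀ᵀ = μ₀ := hμsym
  have hη0T : η0ᵀ = η0 := hη0sym
  have hmT : mᵀ = m := by
    rw [← conjTranspose_eq_transpose_of_trivial]; exact hm.1
  have hminveq : minv = m⁻¹ := (inv_eq_right_inv hminv).symm
  have hminvT : minvᵀ = minv := by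
    rw [hminveq, transpose_nonsing_inv, hmT]
  have hET : (η0⁻¹)ᵀ = η0⁻¹ := by
    rw [transpose_nonsing_inv, hη0T]
  have hμinv : μ₀⁻¹ = minv * minv := by
    apply inv_eq_right_inv
    rw [← hmsq, mul_assoc, ← mul_assoc m minv minv, hminv, one_mul, hminv]
  have hE1 : η0 * η0⁻¹ = 1 :=
    mul_nonsing_inv _ ((Matrix.isUnit_iff_isUnit_det η0).mp hη0pos.isUnit)
  -- positivity of constants
  have hopnμpos : 0 < opn μ₀ := opn_pos_of_posdef hμpos
  have hopnμinvpos : 0 < opn μ₀⁻¹ := opn_pos_of_posdef hμpos.inv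
  have hCηpos : 0 < Cη := lt_of_lt_of_le (opn_pos_of_posdef hη0pos) hCη
  have hCνinvpos : 0 < Cνinv := lt_of_lt_of_le (by positivity) hCνinv
  have hCνpos : 0 < Cν := lt_of_lt_of_le hν hCν
  have hCηinvnn : 0 ≤ Cηinv := le_trans (norm_nonneg _) hCηinv
  set M := max (opn μ₀) (opn μ₀⁻¹) with hMdef
  have hM0 : (0:ℝ) < M := lt_of_lt_of_le hopnμpos (le_max_left _ _)
  set K₁ := max Cη Cνinv with hK₁def
  set K₂ := max Cηinv Cν with hK₂def
  have hK₁pos : 0 < K₁ := lt_of_lt_of_le hCηpos (le_max_left _ _)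
  have hK₂pos : 0 < K₂ := lt_of_lt_of_le hCνpos (le_max_right _ _)
  have hminmax : min (opn μ₀)⁻¹ (opn μ₀⁻¹)⁻¹ = M⁻¹ :=
    min_inv_eq _ _ hopnμpos hopnμinvpos
  have hsum : (∑ i, ξ i ^ 2) = ξ ⬝ᵥ ξ := by
    simp [dotProduct, sq]
  set N := ξ ⬝ᵥ ξ with hNdef
  have hN0 : 0 ≤ N := dot_nonneg ξ
  -- symmetry of the symbol
  have heffT : (effSymbol m minv η0 ν ξ)ᵀ = effSymbol m minv η0 ν ξ := by
    simp only [effSymbol, transpose_add, transpose_smul, transpose_mul, transpose_transpose,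
      hmT, hminvT, hET, vecMulVec_transp, mul_assoc]
  -- psd form of η0 and η0⁻¹
  have hη0psd : ∀ u : Fin 3 → ℝ, 0 ≤ u ⬝ᵥ η0 *ᵥ u := by
    intro u
    have := hη0pos.posSemidef.dotProduct_mulVec_nonneg u
    simpa using this
  -- common quadratic form facts, for a fixed x
  have hforms : ∀ x : Fin 3 → ℝ,
      K₁⁻¹ * (M⁻¹ * (N * (x ⬝ᵥ x)))
        ≤ x ⬝ᵥ (effSymbol m minv η0 ν ξ) *ᵥ x ∧
      x ⬝ᵥ (effSymbol m minv η0 ν ξ) *ᵥ x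
        ≤ (opn μ₀ + opn μ₀⁻¹) * K₂ * N * (x ⬝ᵥ x) := by
    intro x
    set y := minv *ᵥ x with hydef
    set w := crossMat ξ *ᵥ y with hwdef
    set z := m *ᵥ x with hzdef
    set b := ξ ⬝ᵥ z with hbdef
    set W := w ⬝ᵥ (η0⁻¹ *ᵥ w) with hWdef
    have hQ : x ⬝ᵥ (effSymbol m minv η0 ν ξ) *ᵥ x = W + ν * b^2 :=
      eff_form m minv η0 hmT hminvT ν ξ x
    have hww0 : 0 ≤ w ⬝ᵥ w := dot_nonneg w
    have hX0 : 0 ≤ x ⬝ᵥ x := dot_nonneg x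
    -- W ≥ (w⬝w)/Cη  and  W ≤ Cηinv * (w⬝w)
    have hu : η0 *ᵥ (η0⁻¹ *ᵥ w) = w := by
      rw [mulVec_mulVec, hE1, one_mulVec]
    have hWnn : 0 ≤ W := by
      have h := hη0psd (η0⁻¹ *ᵥ w)
      rw [hu] at h
      rw [hWdef, dotProduct_comm]
      exact h
    have hWlb : (w ⬝ᵥ w) / Cη ≤ W := by
      have hcs := psd_cs hη0T hη0psd (η0⁻¹ *ᵥ w) w
      have h1 : (η0⁻¹ *ᵥ w) ⬝ᵥ η0 *ᵥ w = w ⬝ᵥ w := by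
        rw [dot_shift hη0T, hu]
      have h2 : (η0⁻¹ *ᵥ w) ⬝ᵥ η0 *ᵥ (η0⁻¹ *ᵥ w) = W := by
        rw [dot_shift hη0T, hu, hWdef]
      have h3 : w ⬝ᵥ η0 *ᵥ w ≤ Cη * (w ⬝ᵥ w) :=
        le_trans (dot_mulVec_le _ _) (mul_le_mul_of_nonneg_right hCη hww0)
      rw [h1, h2] at hcs
      rw [div_le_iff₀ hCηpos]
      rcases eq_or_lt_of_le hww0 with hz0 | hzpos
      · rw [← hz0]; positivity
      · have h4 : (w ⬝ᵥ w)^2 ≤ W * Cη * (w ⬝ᵥ w) := by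
          calc (w ⬝ᵥ w)^2 ≤ W * (w ⬝ᵥ η0 *ᵥ w) := hcs
            _ ≤ W * (Cη * (w ⬝ᵥ w)) := mul_le_mul_of_nonneg_left h3 hWnn
            _ = W * Cη * (w ⬝ᵥ w) := by ring
        have := (mul_le_mul_iff_of_pos_right hzpos).mp (by nlinarith [h4] : (w ⬝ᵥ w) * (w ⬝ᵥ w) ≤ W * Cη * (w ⬝ᵥ w))
        linarith
    have hWub : W ≤ Cηinv * (w ⬝ᵥ w) :=
      le_trans (dot_mulVec_le _ _) (mul_le_mul_of_nonneg_right hCηinv hww0)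
    -- core inequality
    have hx : m *ᵥ y = x := by
      rw [hydef, mulVec_mulVec, hminv, one_mulVec]
    have hX : y ⬝ᵥ μ₀ *ᵥ y = x ⬝ᵥ x := by
      rw [← hmsq, ← mulVec_mulVec, dot_shift hmT, hx]
    have hb : (μ₀ *ᵥ ξ) ⬝ᵥ y = b := by
      rw [hbdef, hzdef, ← hx, mulVec_mulVec, hmsq, dot_shift hμT]
    have hLag : w ⬝ᵥ w = N * (y ⬝ᵥ y) - (ξ ⬝ᵥ y)^2 := cross_lagrange ξ y
    have hcore : N / M * (x ⬝ᵥ x) ≤ w ⬝ᵥ w + b^2 := by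
      have := star_lemma μ₀ m minv hμT hmT hminvT hmsq hminv ξ y
      rw [hX, hb, ← hMdef, ← hNdef] at this
      rw [hLag]
      linarith
    constructor
    · -- lower bound
      have hνK : K₁⁻¹ ≤ ν := by
        have h1 : ν⁻¹ ≤ K₁ := le_trans hCνinv (le_max_right _ _)
        calc K₁⁻¹ ≤ (ν⁻¹)⁻¹ := by
              exact inv_anti₀ (by positivity) h1
          _ = ν := inv_inv ν
      have hwK : K₁⁻¹ * (w ⬝ᵥ w) ≤ W := by
        calc K₁⁻¹ * (w ⬝ᵥ w) = (w ⬝ᵥ w) / K₁ := by ring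
          _ ≤ (w ⬝ᵥ w) / Cη :=
              div_le_div_of_nonneg_left hww0 hCηpos (le_max_left _ _)
          _ ≤ W := hWlb
      have hbK : K₁⁻¹ * b^2 ≤ ν * b^2 :=
        mul_le_mul_of_nonneg_right hνK (sq_nonneg b)
      rw [hQ]
      have hKinv0 : 0 ≤ K₁⁻¹ := by positivity
      have h5 : K₁⁻¹ * (N / M * (x ⬝ᵥ x)) ≤ K₁⁻¹ * (w ⬝ᵥ w + b^2) :=
        mul_le_mul_of_nonneg_left hcore hKinv0
      have h6 : K₁⁻¹ * (M⁻¹ * (N * (x ⬝ᵥ x))) = K₁⁻¹ * (N / M * (x ⬝ᵥ x)) := by ring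
      rw [h6]
      calc K₁⁻¹ * (N / M * (x ⬝ᵥ x)) ≤ K₁⁻¹ * (w ⬝ᵥ w + b^2) := h5
        _ = K₁⁻¹ * (w ⬝ᵥ w) + K₁⁻¹ * b^2 := by ring
        _ ≤ W + ν * b^2 := add_le_add hwK hbK
    · -- upper bound
      have hyy : y ⬝ᵥ y ≤ opn μ₀⁻¹ * (x ⬝ᵥ x) := by
        have h1 : y ⬝ᵥ y = x ⬝ᵥ μ₀⁻¹ *ᵥ x := by
          rw [hydef, ← dot_shift hminvT x (minv *ᵥ x), mulVec_mulVec, hμinv]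
        rw [h1]
        exact dot_mulVec_le _ _
      have hzz : z ⬝ᵥ z ≤ opn μ₀ * (x ⬝ᵥ x) := by
        have h1 : z ⬝ᵥ z = x ⬝ᵥ μ₀ *ᵥ x := by
          rw [hzdef, ← dot_shift hmT x (m *ᵥ x), mulVec_mulVec, hmsq]
        rw [h1]
        exact dot_mulVec_le _ _
      have hww2 : w ⬝ᵥ w ≤ N * (y ⬝ᵥ y) := by
        rw [hLag]; nlinarith [sq_nonneg (ξ ⬝ᵥ y)]
      have hb2 : b^2 ≤ N * (z ⬝ᵥ z) := by
        have := psd_cs (A := (1 : Matrix (Fin 3) (Fin 3) ℝ)) transpose_one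
          (fun u => by rw [one_mulVec]; exact dot_nonneg u) ξ z
        simpa [one_mulVec, ← hNdef, ← hbdef] using this
      have hzz0 : 0 ≤ z ⬝ᵥ z := dot_nonneg z
      have hyy0 : 0 ≤ y ⬝ᵥ y := dot_nonneg y
      rw [hQ]
      have hWK : W ≤ K₂ * (w ⬝ᵥ w) :=
        le_trans hWub (mul_le_mul_of_nonneg_right (le_max_left _ _) hww0)
      have hνb : ν * b^2 ≤ K₂ * b^2 :=
        mul_le_mul_of_nonneg_right (le_trans hCν (le_max_right _ _)) (sq_nonneg b)
      calc W + ν * b^2 ≤ K₂ * (w ⬝ᵥ w) + K₂ * b^2 := add_le_add hWK hνb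
        _ ≤ K₂ * (N * (opn μ₀⁻¹ * (x ⬝ᵥ x))) + K₂ * (N * (opn μ₀ * (x ⬝ᵥ x))) := by
            gcongr
            · exact le_trans hww2 (mul_le_mul_of_nonneg_left hyy hN0)
            · exact le_trans hb2 (mul_le_mul_of_nonneg_left hzz hN0)
        _ = (opn μ₀ + opn μ₀⁻¹) * K₂ * N * (x ⬝ᵥ x) := by ring
  constructor
  · refine PosSemidef.of_dotProduct_mulVec_nonneg (isHerm_of_transpose ?_) (fun x => ?_)
    · rw [transpose_sub, transpose_smul, transpose_one, heffT]
    · have hform := (hforms x).1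
      have hstar : star x = x := by simp
      rw [hstar, sub_mulVec, smul_mulVec, one_mulVec, dotProduct_sub, dotProduct_smul,
        smul_eq_mul]
      rw [hminmax, hsum]
      nlinarith [hform]
  · refine PosSemidef.of_dotProduct_mulVec_nonneg (isHerm_of_transpose ?_) (fun x => ?_)
    · rw [transpose_sub, transpose_smul, transpose_one, heffT]
    · have hform := (hforms x).2
      have hstar : star x = x := by simp
      rw [hstar, sub_mulVec, smul_mulVec, one_mulVec, dotProduct_sub, dotProduct_smul,
        smul_eq_mul]
      rw [hsum]
      linarith [hform]
end
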